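/- Let B be a chordal bipartite graph (a bipartite graph with no induced cycle of length greater than 4) with bipartition X, Y, and let e = ij be a bisimplicial edge of B (i ∈ X, j ∈ Y, and the induced subgraph on N_B(i) ∪ N_B(j) is a complete bipartite graph). Then B − e (B with edge e deleted) is again chordal bipartite. -/

import Mathlib

open SimpleGraph

/-- Let `B` be a chordal bipartite graph (bipartite with no induced
cycle of length greater than four) with bipartition `X`, `Xᶜ`, and let `ij` be a
bisimplicial edge (`i ∈ X`, `j ∉ X`, and every neighbor of `i` is adjacent to every
neighbor of `j`).  Then `B − e` is again chordal bipartite. -/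
theorem deleting_bisimplicial_edge_preserves_chordal_bipartite {V : Type*}
    (B : SimpleGraph V) (X : Set V)
    (hbip : ∀ u v : V, B.Adj u v → (u ∈ X ↔ v ∉ X))
    (hcb : ∀ n : ℕ, 5 ≤ n → IsEmpty (cycleGraph n ↪g B))
    (i j : V) (hi : i ∈ X) (hj : j ∉ X) (hij : B.Adj i j)
    (hbisimp : ∀ a b : V, B.Adj i a → B.Adj j b → a ≠ b → B.Adj a b) :
    ∀ n : ℕ, 5 ≤ n → IsEmpty (cycleGraph n ↪g B.deleteEdges {s(i, j)}) := by
  intro n hn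
  constructor
  intro f
  obtain ⟨m, rfl⟩ : ∃ m, n = m + 2 := ⟨n - 2, by omega⟩
  -- adjacency in the deleted graph
  have hadj : ∀ x y : Fin (m + 2), (cycleGraph (m + 2)).Adj x y ↔
      (B.deleteEdges {s(i, j)}).Adj (f x) (f y) := fun x y => (f.map_adj_iff).symm
  have hdel : ∀ u v : V, (B.deleteEdges {s(i, j)}).Adj u v ↔
      B.Adj u v ∧ ¬(u = i ∧ v = j) ∧ ¬(u = j ∧ v = i) := by
    intro u v
    simp only [deleteEdges_adj, Set.mem_singleton_iff, Sym2.eq_iff, not_or]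
  by_cases hcase : ∃ a b : Fin (m + 2), f a = i ∧ f b = j
  · obtain ⟨a, b, hfa, hfb⟩ := hcase
    have hab : a ≠ b := by
      intro h; subst h
      have hij' : i = j := hfa.symm.trans hfb
      exact hj (hij' ▸ hi)
    -- a and b are not adjacent in the cycle
    have hnadj : ¬(cycleGraph (m + 2)).Adj a b := by
      intro h
      have := (hadj a b).mp h
      rw [hfa, hfb, hdel] at this
      exact this.2.1 ⟨rfl, rfl⟩
    -- f (a+1) is a B-neighbor of i, f (b+1) is a B-neighbor of j
    have haa1 : (cycleGraph (m + 2)).Adj a (a + 1) := by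
      rw [cycleGraph_adj]; right; abel
    have hbb1 : (cycleGraph (m + 2)).Adj b (b + 1) := by
      rw [cycleGraph_adj]; right; abel
    have h1 : B.Adj i (f (a + 1)) := by
      have := (hadj a (a + 1)).mp haa1
      rw [hfa, hdel] at this
      exact this.1
    have h2 : B.Adj j (f (b + 1)) := by
      have := (hadj b (b + 1)).mp hbb1
      rw [hfb, hdel] at this
      exact this.1
    have hne : f (a + 1) ≠ f (b + 1) := by
      intro h
      exact hab (by have := f.injective h; simpa using this)
    have hB : B.Adj (f (a + 1)) (f (b + 1)) := hbisimp _ _ h1 h2 hne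
    -- f(a+1) ≠ i, j and f(b+1) ≠ i, j appropriately
    have hne1 : f (a + 1) ≠ j := by
      intro h
      have : a + 1 = b := f.injective (h.trans hfb.symm)
      exact hnadj (this ▸ haa1)
    have hne2 : f (b + 1) ≠ i := by
      intro h
      have : b + 1 = a := f.injective (h.trans hfa.symm)
      exact hnadj ((this ▸ hbb1).symm)
    have hdadj : (B.deleteEdges {s(i, j)}).Adj (f (a + 1)) (f (b + 1)) := by
      rw [hdel]
      refine ⟨hB, ?_, ?_⟩
      · rintro ⟨h, -⟩
        have : a + 1 = a := f.injective (h.trans hfa.symm)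
        simp at this
      · rintro ⟨h, -⟩; exact hne1 h
    have hcyc : (cycleGraph (m + 2)).Adj (a + 1) (b + 1) := (hadj _ _).mpr hdadj
    -- derive a ~ b, contradiction
    apply hnadj
    rw [cycleGraph_adj] at hcyc ⊢
    rcases hcyc with h | h
    · left; rw [← h]; abel
    · right; rw [← h]; abel
  · -- i, j not both in the image: f is an embedding into B
    push_neg at hcase
    have : IsEmpty (cycleGraph (m + 2) ↪g B) := hcb _ hn
    apply this.false
    refine ⟨f.toEmbedding, ?_⟩
    intro x y
    constructor
    · intro h
      have hd : (B.deleteEdges {s(i, j)}).Adj (f x) (f y) := by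
        rw [hdel]
        refine ⟨h, ?_, ?_⟩
        · rintro ⟨h1, h2⟩; exact hcase x y h1 h2
        · rintro ⟨h1, h2⟩; exact hcase y x h2 h1
      exact (hadj x y).mpr hd
    · intro h
      exact ((hdel _ _).mp ((hadj x y).mp h)).1
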